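/- Let θ : 𝔻 → ℂ be holomorphic with |θ| ≤ 1 and θ(0) = 0, and let μ be the Clark measure with parameter γ = 1, i.e. ∫(ξ+z)/(ξ−z) dμ(ξ) = (1+θ(z))/(1−θ(z)). Then θ(z) = z · 𝒞_{ξ̄μ}(z) for all z ∈ 𝔻, where 𝒞_{ξ̄μ} = K(ξ̄μ)/Kμ is the normalized Cauchy transform of the function ξ ↦ ξ̄ with respect to μ. -/

import Mathlib

open MeasureTheory Metric Complex

noncomputable instance : MeasurableSpace Circle := borel Circle
instance : BorelSpace Circle := ⟨rfl⟩

/-- Let `θ` be a Schur function with `θ(0) = 0` and let `μ` be its Clark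
measure with parameter `γ = 1`, i.e. `∫ (ξ+z)/(ξ−z) dμ(ξ) = (1+θ(z))/(1−θ(z))` on `𝔻`. Then
`θ(z) = z · K(ξ̄μ)(z)/Kμ(z)` for all `z ∈ 𝔻` (normalized Cauchy transform of `ξ̄`). -/
theorem stmt11 (θ : ℂ → ℂ) (hθd : DifferentiableOn ℂ θ (ball 0 1))
    (hθ1 : ∀ z ∈ ball (0 : ℂ) 1, ‖θ z‖ ≤ 1) (hθ0 : θ 0 = 0)
    (μ : Measure Circle) [IsProbabilityMeasure μ]
    (hHerglotz : ∀ z ∈ ball (0 : ℂ) 1,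
      ∫ ξ : Circle, ((ξ : ℂ) + z) / ((ξ : ℂ) - z) ∂μ = (1 + θ z) / (1 - θ z)) :
    ∀ z ∈ ball (0 : ℂ) 1,
      θ z = z * (∫ ξ : Circle, (starRingEnd ℂ) (ξ : ℂ) /
          (1 - (starRingEnd ℂ) (ξ : ℂ) * z) ∂μ) /
        (∫ ξ : Circle, (1 - (starRingEnd ℂ) (ξ : ℂ) * z)⁻¹ ∂μ) := by
  intro z hz
  rcases eq_or_ne z 0 with rfl | hz0
  · simp [hθ0]
  have hznorm : ‖z‖ < 1 := by simpa using hz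
  -- Schwarz-type estimate: `‖θ z‖ < 1`.
  have hθz : ‖θ z‖ < 1 := by
    set ε : ℝ := (1 - ‖z‖) / (2 * ‖z‖) with hε
    have hz0' : (0 : ℝ) < ‖z‖ := norm_pos_iff.2 hz0
    have hε0 : 0 < ε := div_pos (by linarith) (by positivity)
    have hmaps : Set.MapsTo θ (ball (0 : ℂ) 1) (ball (θ 0) (1 + ε)) := by
      intro w hw
      rw [hθ0, mem_ball_zero_iff]
      exact lt_of_le_of_lt (hθ1 w hw) (by linarith)
    have := Complex.dist_le_div_mul_dist_of_mapsTo_ball hθd (hmaps.mono_right ball_subset_closedBall) hz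
    rw [hθ0, dist_zero_right, dist_zero_right, div_one] at this
    have hεz : ε * ‖z‖ = (1 - ‖z‖) / 2 := by
      rw [hε, div_mul_eq_mul_div, mul_comm 2 ‖z‖, mul_comm (1 - ‖z‖) ‖z‖,
        mul_div_mul_left _ _ hz0'.ne']
    calc ‖θ z‖ ≤ (1 + ε) * ‖z‖ := this
      _ = ‖z‖ + ε * ‖z‖ := by ring
      _ = ‖z‖ + (1 - ‖z‖) / 2 := by rw [hεz]
      _ < 1 := by linarith
  have h1θ : (1 : ℂ) - θ z ≠ 0 := by
    intro h
    have : θ z = 1 := by linear_combination -h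
    rw [this] at hθz; simp at hθz
  -- pointwise identities on the circle
  have hden : ∀ ξ : Circle, (1 : ℂ) - (starRingEnd ℂ) (ξ : ℂ) * z ≠ 0 := by
    intro ξ h
    have h1 : (starRingEnd ℂ) (ξ : ℂ) * z = 1 := by linear_combination -h
    have : ‖(starRingEnd ℂ) (ξ : ℂ) * z‖ < 1 := by
      rw [norm_mul, RCLike.norm_conj]
      simpa [Circle.norm_coe] using hznorm
    rw [h1] at this; simp at this
  have hsub : ∀ ξ : Circle, (ξ : ℂ) - z ≠ 0 := by
    intro ξ h
    have h1 : (ξ : ℂ) = z := by linear_combination h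
    have := Circle.norm_coe ξ
    rw [h1] at this
    rw [this] at hznorm; norm_num at hznorm
  have hconj : ∀ ξ : Circle, (starRingEnd ℂ) (ξ : ℂ) * (ξ : ℂ) = 1 := by
    intro ξ
    rw [← Circle.coe_inv_eq_conj, ← Circle.coe_mul]
    simp
  have hpt : ∀ ξ : Circle, ((ξ : ℂ) + z) / ((ξ : ℂ) - z)
      = 2 * (1 - (starRingEnd ℂ) (ξ : ℂ) * z)⁻¹ - 1 := by
    intro ξ
    have h1 := hsub ξ
    have h2 := hden ξ
    have hc := hconj ξ
    have h2' : 1 - z * (starRingEnd ℂ) (ξ : ℂ) ≠ 0 := by rwa [mul_comm]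
    field_simp
    linear_combination (-2*z) * hc
  -- continuity and integrability
  have hcont : Continuous fun ξ : Circle => (1 - (starRingEnd ℂ) (ξ : ℂ) * z)⁻¹ := by
    apply Continuous.inv₀
    · exact (continuous_const.sub (((Complex.continuous_conj.comp
        continuous_subtype_val)).mul continuous_const))
    · exact fun ξ => hden ξ
  have hint : Integrable (fun ξ : Circle => (1 - (starRingEnd ℂ) (ξ : ℂ) * z)⁻¹) μ := by
    rw [← integrableOn_univ]
    exact hcont.continuousOn.integrableOn_compact isCompact_univ
  -- compute `∫ (1 - ξ̄ z)⁻¹ dμ`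
  have hI1 : (∫ ξ : Circle, (1 - (starRingEnd ℂ) (ξ : ℂ) * z)⁻¹ ∂μ) = (1 - θ z)⁻¹ := by
    have h0 := hHerglotz z hz
    have heq : (∫ ξ : Circle, ((ξ : ℂ) + z) / ((ξ : ℂ) - z) ∂μ)
        = ∫ ξ : Circle, (2 * (1 - (starRingEnd ℂ) (ξ : ℂ) * z)⁻¹ - 1) ∂μ := by
      congr 1; funext ξ; exact hpt ξ
    rw [heq] at h0
    rw [integral_sub ((hint.const_mul 2)) (integrable_const 1),
      integral_const_mul 2, integral_const] at h0
    simp only [measure_univ, ENNReal.toReal_one, probReal_univ, one_smul] at h0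
    have h2 : (2 : ℂ) * (∫ ξ : Circle, (1 - (starRingEnd ℂ) (ξ : ℂ) * z)⁻¹ ∂μ)
        = (1 + θ z) / (1 - θ z) + 1 := by linear_combination h0
    generalize (∫ ξ : Circle, (1 - (starRingEnd ℂ) (ξ : ℂ) * z)⁻¹ ∂μ) = I at h2 ⊢
    field_simp at h2 ⊢
    linear_combination h2 / 2
  -- compute `∫ ξ̄ / (1 - ξ̄ z) dμ`
  have hpt2 : ∀ ξ : Circle, (starRingEnd ℂ) (ξ : ℂ) / (1 - (starRingEnd ℂ) (ξ : ℂ) * z)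
      = z⁻¹ * ((1 - (starRingEnd ℂ) (ξ : ℂ) * z)⁻¹ - 1) := by
    intro ξ
    have h2 := hden ξ
    field_simp
    ring
  have hI2 : (∫ ξ : Circle, (starRingEnd ℂ) (ξ : ℂ) /
      (1 - (starRingEnd ℂ) (ξ : ℂ) * z) ∂μ) = z⁻¹ * ((1 - θ z)⁻¹ - 1) := by
    have heq : (∫ ξ : Circle, (starRingEnd ℂ) (ξ : ℂ) /
        (1 - (starRingEnd ℂ) (ξ : ℂ) * z) ∂μ)
        = ∫ ξ : Circle, z⁻¹ * ((1 - (starRingEnd ℂ) (ξ : ℂ) * z)⁻¹ - 1) ∂μ := by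
      congr 1; funext ξ; exact hpt2 ξ
    rw [heq, integral_const_mul z⁻¹, integral_sub hint (integrable_const 1), integral_const]
    simp only [measure_univ, ENNReal.toReal_one, probReal_univ, one_smul, hI1]
  rw [hI1, hI2]
  have hI1ne : ((1 : ℂ) - θ z)⁻¹ ≠ 0 := inv_ne_zero h1θ
  field_simp
  ring
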